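/- Let G be a DC graph on {1,...,N} and let (a,p) ∈ P^{2N} be such that (G,a,p) satisfies (C_{m(G)}^≥) and (C_{M(G)}^≤). Then z_i^G(a,p) > 0 for every i ∈ {1,...,N}, and the vector of cumulative sums (Z^G_{0,i}(a,p))_{i=1,...,N} = (z_1^G(a,p) + ... + z_i^G(a,p))_{i=1,...,N} is the unique stationary tuple s(a,p) for (a,p); in particular z_i^G(a,p) = s_i(a,p) − s_{i−1}(a,p) for every i (with s_0(a,p) := 0). -/

import Mathlib

open Filter Topology
open scoped Classical

noncomputable section

/-- The positive part `x₊ = max x 0` of a real number. -/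
def pos' (x : ℝ) : ℝ := max x 0

/-- `qq p i = p 1 + ... + p i` (so `qq p 0 = 0`). -/
def qq (p : ℕ → ℝ) (i : ℕ) : ℝ := ∑ j ∈ Finset.Icc 1 i, p j

/-- `dpar a i = a i - a (i-1)`, with the convention `a 0 = 0`. -/
def dpar (a : ℕ → ℝ) (i : ℕ) : ℝ := if i = 1 then a 1 else a i - a (i - 1)

/-- `(a, p)` is a parameter tuple in `P^{2N}`:
`0 < a 1 < a 2 < ... < a N` and `p 1, ..., p N > 0`. -/
def IsParam (N : ℕ) (a p : ℕ → ℝ) : Prop :=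
  0 < a 1 ∧ (∀ i, 1 ≤ i → i < N → a i < a (i + 1)) ∧ (∀ i, 1 ≤ i → i ≤ N → 0 < p i)

/-- `s` is a stationary tuple for the parameters `(a, p)`:
`0 < s 1 < ... < s N` and `a i = ∑_{j=1}^N p j * (s i - s j + s 1)₊` for `1 ≤ i ≤ N`. -/
def IsStationaryTuple (N : ℕ) (a p s : ℕ → ℝ) : Prop :=
  0 < s 1 ∧ (∀ i, 1 ≤ i → i < N → s i < s (i + 1)) ∧
  ∀ i, 1 ≤ i → i ≤ N → a i = ∑ j ∈ Finset.Icc 1 N, p j * pos' (s i - s j + s 1)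

/-- The inverse of (the restriction to `[0, ∞)` of) a function `y : ℝ → ℝ`. -/
def tinv (y : ℝ → ℝ) (x : ℝ) : ℝ := Function.invFunOn y (Set.Ici 0) x

/-- The right derivative of `y` at `t` (the derivative of `y` at `t` within `[t, ∞)`). -/
def rD (y : ℝ → ℝ) (t : ℝ) : ℝ := derivWithin y (Set.Ici t) t

/-- The sequence `(y k)` satisfies recurrence (R).  The condition on the initial function `y 0`
(continuous, piecewise linear with at most `N` points of non-differentiability, vanishing at `0`,
with non-decreasing right derivative taking values in `{q 1, ..., q N}`) is encoded through its
canonical representation: such functions are exactly those of the form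
`t ↦ ∑_{j=1}^N p j * (t - c j)₊` with `c` non-negative, non-decreasing and `c 1 = 0`. -/
def SatisfiesR (N : ℕ) (a p : ℕ → ℝ) (y : ℕ → ℝ → ℝ) : Prop :=
  (∃ c : ℕ → ℝ, c 1 = 0 ∧ (∀ j, 1 ≤ j → j ≤ N → 0 ≤ c j) ∧
      (∀ j, 1 ≤ j → j < N → c j ≤ c (j + 1)) ∧
      ∀ t : ℝ, 0 ≤ t → y 0 t = ∑ j ∈ Finset.Icc 1 N, p j * pos' (t - c j)) ∧
  ∀ k : ℕ, ∀ t : ℝ, 0 ≤ t →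
    y (k + 1) t = ∑ j ∈ Finset.Icc 1 N, p j * pos' (t - tinv (y k) (a j) + tinv (y k) (a 1))

/-- The breakpoints `c j` of the lower bounding trajectory `y₀⁻`:
`c 1 = 0` and `c j = d 1 / q 1 + ∑_{l=2}^j d l / q (l-1)` for `j ≥ 2`. -/
def cminus (a p : ℕ → ℝ) (j : ℕ) : ℝ :=
  if j ≤ 1 then 0
  else a 1 / qq p 1 + ∑ l ∈ Finset.Icc 2 j, (a l - a (l - 1)) / qq p (l - 1)

/-- The lower bounding initial trajectory `y₀⁻`. -/
def yminus0 (N : ℕ) (a p : ℕ → ℝ) : ℝ → ℝ :=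
  fun t => ∑ j ∈ Finset.Icc 1 N, p j * pos' (t - cminus a p j)

/-- The upper bounding initial trajectory `y₀⁺ : t ↦ q N * t`. -/
def yplus0 (N : ℕ) (p : ℕ → ℝ) : ℝ → ℝ := fun t => qq p N * t

/-- The sequence satisfying recurrence (R) with prescribed initial term `y0`. -/
def iterR (N : ℕ) (a p : ℕ → ℝ) (y0 : ℝ → ℝ) : ℕ → ℝ → ℝ
  | 0 => y0
  | k + 1 => fun t =>
      ∑ j ∈ Finset.Icc 1 N,
        p j * pos' (t - tinv (iterR N a p y0 k) (a j) + tinv (iterR N a p y0 k) (a 1))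

/-- `y` is a stationary trajectory: an increasing bijection of `[0,∞)` satisfying the
fixed-point equation of recurrence (R). -/
def IsStatTraj (N : ℕ) (a p : ℕ → ℝ) (y : ℝ → ℝ) : Prop :=
  StrictMonoOn y (Set.Ici 0) ∧ Set.BijOn y (Set.Ici 0) (Set.Ici 0) ∧
  ∀ t : ℝ, 0 ≤ t → y t = ∑ j ∈ Finset.Icc 1 N, p j * pos' (t - tinv y (a j) + tinv y (a 1))

/-- `E_N`: the set of pairs `(i, j)` with `1 ≤ i < j ≤ N`. -/
def ENfin (N : ℕ) : Finset (ℕ × ℕ) :=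
  (Finset.Icc 1 N ×ˢ Finset.Icc 1 N).filter fun e => e.1 < e.2

/-- `Nested e e'` means `e ≼_E e'`, i.e. `e` is nested in `e'`. -/
def Nested (e e' : ℕ × ℕ) : Prop := e'.1 ≤ e.1 ∧ e.1 < e.2 ∧ e.2 ≤ e'.2

/-- `E` is the edge set of a downward closed graph on `{1, ..., N}`. -/
def IsDCGraph (N : ℕ) (E : Finset (ℕ × ℕ)) : Prop :=
  E ⊆ ENfin N ∧ ∀ e ∈ E, ∀ e' : ℕ × ℕ, Nested e' e → e' ∈ E

/-- `bG E i` is the greatest `j > i` with `(i, j) ∈ E`, and `i` if there is no such `j`;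
by convention `bG E 0 = 1`. -/
def bG (E : Finset (ℕ × ℕ)) (i : ℕ) : ℕ :=
  if i = 0 then 1 else max i ((E.filter fun e => e.1 = i).sup fun e => e.2)

/-- `m(G)`: the maximal elements of `E` for `≼_E`. -/
def maxE (E : Finset (ℕ × ℕ)) : Finset (ℕ × ℕ) :=
  E.filter fun e => ∀ e' ∈ E, Nested e e' → e' = e

/-- `M(G)`: the minimal elements of `E_N \ E` for `≼_E`. -/
def minNE (N : ℕ) (E : Finset (ℕ × ℕ)) : Finset (ℕ × ℕ) :=
  (ENfin N \ E).filter fun e => ∀ e' ∈ ENfin N \ E, Nested e' e → e' = e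

/-- The map `T(G) : ℝ^N → ℝ^N`. -/
def TG (a p : ℕ → ℝ) (E : Finset (ℕ × ℕ)) (s : ℕ → ℝ) (i : ℕ) : ℝ :=
  (1 / qq p (bG E i)) * (a i + ∑ j ∈ Finset.Icc 1 (bG E i), p j * (s j - s 1))

/-- The product of `γ` over the consecutive pairs (edges) of a list of vertices. -/
def pathProd (γ : ℕ → ℕ → ℝ) (l : List ℕ) : ℝ := (List.zipWith γ l l.tail).prod

/-- `Γ i j`: the sum, over all directed paths from `i` to `j` using edges of `E`, of the
product of `γ` over the edges of the path.  Since all edges of a DC graph increase, a directed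
path from `i` to `j` is identified with the set `S ⊆ (i, j)` of its intermediate vertices,
subject to consecutive vertices being joined by edges of `E`. -/
def GammaPath (E : Finset (ℕ × ℕ)) (γ : ℕ → ℕ → ℝ) (i j : ℕ) : ℝ :=
  if i = j then 1
  else if i < j then
    ∑ S ∈ (Finset.Ioo i j).powerset,
      if List.Chain' (fun u v => (u, v) ∈ E) (Finset.sort (insert i (insert j S)) (· ≤ ·))
      then pathProd γ (Finset.sort (insert i (insert j S)) (· ≤ ·)) else 0
  else 0

/-- The edge weight `γ^G_{i,j}`. -/
def gammaG (p : ℕ → ℝ) (E : Finset (ℕ × ℕ)) (i j : ℕ) : ℝ :=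
  (qq p (bG E i) - qq p (max (j - 1) (bG E (i - 1)))) / qq p (bG E (i - 1))

/-- `Γ^G_{i,j}`. -/
def GammaG (p : ℕ → ℝ) (E : Finset (ℕ × ℕ)) (i j : ℕ) : ℝ := GammaPath E (gammaG p E) i j

/-- `z_1^G (a, p)`. -/
def z1G (N : ℕ) (a p : ℕ → ℝ) (E : Finset (ℕ × ℕ)) : ℝ :=
  (∑ j ∈ Finset.Icc 1 N, GammaG p E 1 j * dpar a j / qq p (bG E (j - 1))) /
  (1 + ∑ j ∈ Finset.Icc 1 N,
      GammaG p E 1 j * (qq p (bG E j) - qq p (bG E (j - 1))) / qq p (bG E (j - 1)))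

/-- `z_i^G (a, p)`. -/
def zG (N : ℕ) (a p : ℕ → ℝ) (E : Finset (ℕ × ℕ)) (i : ℕ) : ℝ :=
  if i = 1 then z1G N a p E
  else
    (∑ j ∈ Finset.Icc i N, GammaG p E i j * dpar a j / qq p (bG E (j - 1))) -
      z1G N a p E *
        ∑ j ∈ Finset.Icc i N,
          GammaG p E i j * (qq p (bG E j) - qq p (bG E (j - 1))) / qq p (bG E (j - 1))

/-- `Z^G_{i,j} (a, p) = z_{i+1}^G + ... + z_j^G`. -/
def ZG (N : ℕ) (a p : ℕ → ℝ) (E : Finset (ℕ × ℕ)) (i j : ℕ) : ℝ :=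
  ∑ l ∈ Finset.Icc (i + 1) j, zG N a p E l

/-- The DC graph `Gr(a, p)` read off from the stationary tuple `s = s(a, p)`: its edges are
the pairs `(i, j) ∈ E_N` with `s 1 > s j - s i`. -/
def GrEdges (N : ℕ) (s : ℕ → ℝ) : Finset (ℕ × ℕ) :=
  (ENfin N).filter fun e => s e.2 - s e.1 < s 1

/-- `ζ` solves the linear system `S^G (a, p)`. -/
def SolvesS (N : ℕ) (a p : ℕ → ℝ) (E : Finset (ℕ × ℕ)) (ζ : ℕ → ℝ) : Prop :=
  ∀ i, 1 ≤ i → i ≤ N →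
    a i = ∑ j ∈ Finset.Icc 1 (bG E i),
      p j * ((∑ l ∈ Finset.Icc 1 i, ζ l) - (∑ l ∈ Finset.Icc 1 j, ζ l) + ζ 1)

/-- `P^{2N}`, viewed as a (cylinder) subset of the space of pairs of real sequences; only the
coordinates `a 1, ..., a N, p 1, ..., p N` are constrained. -/
def Pset (N : ℕ) : Set ((ℕ → ℝ) × (ℕ → ℝ)) := {ap | IsParam N ap.1 ap.2}

/-- The region `P_G = {(a, p) ∈ P^{2N} : Gr(a, p) = G}`. -/
def PGset (N : ℕ) (E : Finset (ℕ × ℕ)) : Set ((ℕ → ℝ) × (ℕ → ℝ)) :=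
  {ap | IsParam N ap.1 ap.2 ∧ ∃ s : ℕ → ℝ, IsStationaryTuple N ap.1 ap.2 s ∧ GrEdges N s = E}

/-- The boundary of `P_G` relative to `P^{2N}`.  Since `P^{2N}` is open, the closure of `P_G`
relative to `P^{2N}` is `closure (PGset N E) ∩ Pset N` and its relative interior is
`interior (PGset N E)`. -/
def relBoundary (N : ℕ) (E : Finset (ℕ × ℕ)) : Set ((ℕ → ℝ) × (ℕ → ℝ)) :=
  (closure (PGset N E) ∩ Pset N) \ interior (PGset N E)

/-- The trajectory `y^{(m)}` built from a tuple `s`: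
`t ↦ ∑_{j=1}^N p j * (t - s j + s 1)₊`. -/
def trajOfS (N : ℕ) (p s : ℕ → ℝ) : ℝ → ℝ :=
  fun t => ∑ j ∈ Finset.Icc 1 N, p j * pos' (t - s j + s 1)

/-- The DC graph `G^{(m)}` associated with a tuple `s`: its edges are the `(i, j) ∈ E_N` with
`t^{(m)} (a i) - s j + s 1 > 0`, where `t^{(m)}` is the inverse of `trajOfS N p s`. -/
def GrFromS (N : ℕ) (a p s : ℕ → ℝ) : Finset (ℕ × ℕ) :=
  (ENfin N).filter fun e => 0 < tinv (trajOfS N p s) (a e.1) - s e.2 + s 1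

end

section
variable {N : ℕ} {a p : ℕ → ℝ} {E : Finset (ℕ × ℕ)}

lemma mem_ENfin {i j : ℕ} : (i, j) ∈ ENfin N ↔ 1 ≤ i ∧ i < j ∧ j ≤ N := by
  simp only [ENfin, Finset.mem_filter, Finset.mem_product, Finset.mem_Icc]
  constructor <;> intro h <;> omega

lemma qq_nonneg (hp : ∀ i, 1 ≤ i → i ≤ N → 0 < p i) {i : ℕ} (h2 : i ≤ N) : 0 ≤ qq p i := by
  apply Finset.sum_nonneg
  intro l hl; rw [Finset.mem_Icc] at hl; exact (hp l hl.1 (le_trans hl.2 h2)).le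

lemma qq_pos (hp : ∀ i, 1 ≤ i → i ≤ N → 0 < p i) {i : ℕ} (h1 : 1 ≤ i) (h2 : i ≤ N) :
    0 < qq p i := by
  apply Finset.sum_pos
  · intro l hl; rw [Finset.mem_Icc] at hl; exact hp l hl.1 (le_trans hl.2 h2)
  · exact ⟨1, by simp [h1]⟩

lemma qq_sub (hp : ∀ i, 1 ≤ i → i ≤ N → 0 < p i) {i j : ℕ} (hij : i ≤ j) :
    qq p j - qq p i = ∑ l ∈ Finset.Ioc i j, p l := by
  have h1 : Finset.Icc 1 j = Finset.Icc 1 i ∪ Finset.Ioc i j := by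
    ext x; simp only [Finset.mem_union, Finset.mem_Icc, Finset.mem_Ioc]; omega
  have h2 : Disjoint (Finset.Icc 1 i) (Finset.Ioc i j) := by
    rw [Finset.disjoint_left]; intro x hx hx'
    simp only [Finset.mem_Icc] at hx; simp only [Finset.mem_Ioc] at hx'; omega
  rw [qq, qq, h1, Finset.sum_union h2]; ring

lemma qq_mono (hp : ∀ i, 1 ≤ i → i ≤ N → 0 < p i) {i j : ℕ} (hij : i ≤ j) (hj : j ≤ N) :
    qq p i ≤ qq p j := by
  have := qq_sub (N := N) hp hij
  have h2 : 0 ≤ ∑ l ∈ Finset.Ioc i j, p l := by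
    apply Finset.sum_nonneg; intro l hl; rw [Finset.mem_Ioc] at hl
    exact (hp l (by omega) (le_trans hl.2 hj)).le
  linarith

lemma bG_zero : bG E 0 = 1 := by simp [bG]

lemma le_bG {i : ℕ} (h : 1 ≤ i) : i ≤ bG E i := by
  rw [bG, if_neg (by omega)]; exact le_max_left _ _

lemma bG_pos (i : ℕ) : 1 ≤ bG E i := by
  rcases Nat.eq_zero_or_pos i with h | h
  · simp [h, bG_zero]
  · exact le_trans h (le_bG h)

lemma bG_le (hE : IsDCGraph N E) (hN : 1 ≤ N) {i : ℕ} (hi : i ≤ N) : bG E i ≤ N := by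
  rw [bG]
  split
  · exact hN
  · apply max_le hi
    apply Finset.sup_le
    intro e he
    rw [Finset.mem_filter] at he
    have := hE.1 he.1
    rcases e with ⟨x, y⟩
    exact (mem_ENfin.mp this).2.2

lemma edge_iff (hE : IsDCGraph N E) {i j : ℕ} (hi : 1 ≤ i) :
    (i, j) ∈ E ↔ i < j ∧ j ≤ bG E i := by
  constructor
  · intro h
    have hmem := mem_ENfin.mp (hE.1 h)
    refine ⟨hmem.2.1, ?_⟩
    rw [bG, if_neg (by omega)]
    refine le_trans ?_ (le_max_right _ _)
    have hm : (i, j) ∈ E.filter fun e => e.1 = i := by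
      rw [Finset.mem_filter]; exact ⟨h, rfl⟩
    exact Finset.le_sup (f := fun e => e.2) hm
  · rintro ⟨hij, hjb⟩
    have hb : bG E i = max i ((E.filter fun e => e.1 = i).sup fun e => e.2) := by
      rw [bG, if_neg (by omega)]
    have hsup : i < (E.filter fun e => e.1 = i).sup fun e => e.2 := by
      rcases le_or_gt ((E.filter fun e => e.1 = i).sup fun e => e.2) i with h | h
      · exfalso; rw [hb] at hjb; omega
      · exact h
    have hne : ((E.filter fun e => e.1 = i)).Nonempty := by
      by_contra hc
      rw [Finset.not_nonempty_iff_eq_empty] at hc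
      rw [hc] at hsup; simp at hsup
    obtain ⟨e, he, hesup⟩ := Finset.exists_mem_eq_sup _ hne fun e => e.2
    rw [Finset.mem_filter] at he
    apply hE.2 e he.1
    constructor
    · omega
    constructor
    · exact hij
    · rw [hb] at hjb; rw [he.2, ← hesup] at *; omega

lemma bG_mono_succ (hE : IsDCGraph N E) (i : ℕ) : bG E i ≤ bG E (i + 1) := by
  rcases Nat.eq_zero_or_pos i with h | h
  · subst h; rw [bG_zero]; exact bG_pos 1
  · rcases le_or_gt (bG E i) (i + 1) with hb | hb
    · exact le_trans hb (le_bG (by omega))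
    · have hedge : (i, bG E i) ∈ E := (edge_iff hE h).mpr ⟨by omega, le_refl _⟩
      have : (i + 1, bG E i) ∈ E := hE.2 _ hedge _ ⟨by omega, by omega, le_refl _⟩
      exact ((edge_iff hE (by omega)).mp this).2

lemma bG_mono (hE : IsDCGraph N E) : Monotone (bG E) :=
  monotone_nat_of_le_succ (bG_mono_succ hE)

end

section
variable {E : Finset (ℕ × ℕ)} {γ : ℕ → ℕ → ℝ}

lemma chain'_cons_aux {R : ℕ → ℕ → Prop} {a b : ℕ} {l : List ℕ} :
    List.Chain' R (a :: b :: l) ↔ R a b ∧ List.Chain' R (b :: l) := List.isChain_cons_cons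

lemma pathProd_cons₂ (x y : ℕ) (l : List ℕ) :
    pathProd γ (x :: y :: l) = γ x y * pathProd γ (y :: l) := by
  simp [pathProd]

lemma pathProd_single (x : ℕ) : pathProd γ [x] = 1 := by simp [pathProd]

lemma sort_insert_min {T : Finset ℕ} {m : ℕ} (h : ∀ x ∈ T, m < x) :
    Finset.sort (insert m T) (· ≤ ·) = m :: Finset.sort T (· ≤ ·) :=
  Finset.sort_insert (s := T) (r := (· ≤ ·)) (fun b hb => (h b hb).le) (fun hm => lt_irrefl m (h m hm))

lemma GammaPath_self (i : ℕ) : GammaPath E γ i i = 1 := by simp [GammaPath]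

lemma GammaPath_gt {i j : ℕ} (h : j < i) : GammaPath E γ i j = 0 := by
  rw [GammaPath, if_neg (by omega), if_neg (by omega)]

lemma pathProd_nonneg (hγ : ∀ x y, (x, y) ∈ E → 0 ≤ γ x y) :
    ∀ l : List ℕ, List.Chain' (fun u v => (u, v) ∈ E) l → 0 ≤ pathProd γ l := by
  intro l
  induction l with
  | nil => intro _; simp [pathProd]
  | cons x t ih =>
    cases t with
    | nil => intro _; simp [pathProd]
    | cons y t' =>
      intro hc
      rw [chain'_cons_aux] at hc
      rw [pathProd_cons₂]
      exact mul_nonneg (hγ _ _ hc.1) (ih hc.2)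

lemma GammaPath_nonneg (hγ : ∀ x y, (x, y) ∈ E → 0 ≤ γ x y) (i j : ℕ) :
    0 ≤ GammaPath E γ i j := by
  rw [GammaPath]
  split
  · norm_num
  · split
    · apply Finset.sum_nonneg
      intro S _
      split
      · exact pathProd_nonneg hγ _ (by assumption)
      · exact le_refl 0
    · exact le_refl 0

private lemma gp_base {i₀ i j : ℕ} (h0 : i₀ < j) (hIoo : Finset.Ioo i j = ∅) :
    (∑ S ∈ (Finset.Ioo i j).powerset,
      if List.Chain' (fun u v => (u, v) ∈ E) (Finset.sort (insert i₀ (insert j S)) (· ≤ ·))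
      then pathProd γ (Finset.sort (insert i₀ (insert j S)) (· ≤ ·)) else 0)
    = (∑ k ∈ Finset.Ioo i j, if (i₀, k) ∈ E then γ i₀ k * GammaPath E γ k j else 0)
      + (if (i₀, j) ∈ E then γ i₀ j else 0) := by
  rw [hIoo]
  rw [Finset.powerset_empty, Finset.sum_singleton, Finset.sum_empty, zero_add]
  have h1 : Finset.sort (insert i₀ (insert j (∅ : Finset ℕ))) (· ≤ ·) = [i₀, j] := by
    rw [show (insert j (∅ : Finset ℕ)) = ({j} : Finset ℕ) from rfl]
    rw [sort_insert_min (by intro x hx; rw [Finset.mem_singleton] at hx; omega)]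
    rw [Finset.sort_singleton]
  rw [h1]
  simp [pathProd_cons₂, pathProd_single, List.Chain']

lemma gammaPath_aux : ∀ (n : ℕ) (i₀ i j : ℕ), i₀ ≤ i → i < j → j - i ≤ n + 1 →
    (∑ S ∈ (Finset.Ioo i j).powerset,
      if List.Chain' (fun u v => (u, v) ∈ E) (Finset.sort (insert i₀ (insert j S)) (· ≤ ·))
      then pathProd γ (Finset.sort (insert i₀ (insert j S)) (· ≤ ·)) else 0)
    = (∑ k ∈ Finset.Ioo i j, if (i₀, k) ∈ E then γ i₀ k * GammaPath E γ k j else 0)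
      + (if (i₀, j) ∈ E then γ i₀ j else 0) := by
  intro n
  induction n with
  | zero =>
    intro i₀ i j h0 hij hn
    refine gp_base (by omega) ?_
    apply Finset.eq_empty_of_forall_notMem
    intro x hx; rw [Finset.mem_Ioo] at hx; omega
  | succ n ih =>
    intro i₀ i j h0 hij hn
    rcases le_or_gt j (i + 1) with hj | hj
    · refine gp_base (by omega) ?_
      apply Finset.eq_empty_of_forall_notMem
      intro x hx; rw [Finset.mem_Ioo] at hx; omega
    · have hIoo : Finset.Ioo i j = insert (i + 1) (Finset.Ioo (i + 1) j) := by
        ext x; simp only [Finset.mem_insert, Finset.mem_Ioo]; omega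
      have hnm : i + 1 ∉ Finset.Ioo (i + 1) j := by simp
      have key : ∀ S ∈ (Finset.Ioo (i + 1) j).powerset,
          Finset.sort (insert i₀ (insert j (insert (i + 1) S))) (· ≤ ·)
            = i₀ :: (i + 1) :: Finset.sort (insert j S) (· ≤ ·) := by
        intro S hS
        rw [Finset.mem_powerset] at hS
        have hgt : ∀ x ∈ insert j S, i + 1 < x := by
          intro x hx
          rcases Finset.mem_insert.mp hx with h | h
          · omega
          · exact (Finset.mem_Ioo.mp (hS h)).1
        have hcomm : insert j (insert (i + 1) S) = insert (i + 1) (insert j S) :=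
          Finset.insert_comm _ _ _
        have hgt0 : ∀ x ∈ insert (i + 1) (insert j S), i₀ < x := by
          intro x hx
          rcases Finset.mem_insert.mp hx with h | h
          · omega
          · exact lt_of_le_of_lt (by omega : i₀ ≤ i + 1) (hgt x h)
        rw [hcomm, sort_insert_min hgt0, sort_insert_min hgt]
      have hG : GammaPath E γ (i + 1) j =
          ∑ S ∈ (Finset.Ioo (i + 1) j).powerset,
            if List.Chain' (fun u v => (u, v) ∈ E)
              ((i + 1) :: Finset.sort (insert j S) (· ≤ ·))
            then pathProd γ ((i + 1) :: Finset.sort (insert j S) (· ≤ ·)) else 0 := by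
        rw [GammaPath, if_neg (by omega), if_pos hj]
        apply Finset.sum_congr rfl
        intro S hS
        rw [Finset.mem_powerset] at hS
        have hgt : ∀ x ∈ insert j S, i + 1 < x := by
          intro x hx
          rcases Finset.mem_insert.mp hx with h | h
          · omega
          · exact (Finset.mem_Ioo.mp (hS h)).1
        rw [sort_insert_min hgt]
      have hsecond :
          (∑ S ∈ (Finset.Ioo (i + 1) j).powerset,
            if List.Chain' (fun u v => (u, v) ∈ E)
              (Finset.sort (insert i₀ (insert j (insert (i + 1) S))) (· ≤ ·))
            then pathProd γ (Finset.sort (insert i₀ (insert j (insert (i + 1) S))) (· ≤ ·)) else 0)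
          = if (i₀, i + 1) ∈ E then γ i₀ (i + 1) * GammaPath E γ (i + 1) j else 0 := by
        by_cases he : (i₀, i + 1) ∈ E
        · rw [if_pos he, hG, Finset.mul_sum]
          apply Finset.sum_congr rfl
          intro S hS
          rw [key S hS]
          by_cases hc : List.Chain' (fun u v => (u, v) ∈ E)
              ((i + 1) :: Finset.sort (insert j S) (· ≤ ·))
          · simp only [chain'_cons_aux, he, true_and, hc, if_true, pathProd_cons₂]
          · simp only [chain'_cons_aux, hc, and_false, if_false, mul_zero]
        · rw [if_neg he]
          apply Finset.sum_eq_zero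
          intro S hS
          rw [key S hS]
          simp only [chain'_cons_aux, he, false_and, if_false]
      have hfirst := ih i₀ (i + 1) j (by omega) hj (by omega)
      rw [hIoo, Finset.sum_powerset_insert hnm, hfirst, hsecond, Finset.sum_insert hnm]
      ring

lemma gammaPath_rec {i j : ℕ} (hij : i < j) :
    GammaPath E γ i j
    = ∑ k ∈ Finset.Ioc i j, (if (i, k) ∈ E then γ i k * GammaPath E γ k j else 0) := by
  have h1 : GammaPath E γ i j
      = (∑ k ∈ Finset.Ioo i j, if (i, k) ∈ E then γ i k * GammaPath E γ k j else 0)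
        + (if (i, j) ∈ E then γ i j else 0) := by
    rw [GammaPath, if_neg (by omega), if_pos hij]
    exact gammaPath_aux (j - i) i i j (le_refl i) hij (by omega)
  have h2 : Finset.Ioc i j = insert j (Finset.Ioo i j) := by
    ext x; simp only [Finset.mem_insert, Finset.mem_Ioo, Finset.mem_Ioc]; omega
  have h3 : j ∉ Finset.Ioo i j := by simp
  rw [h1, h2, Finset.sum_insert h3, GammaPath_self]
  rw [mul_one]
  ring

end

/-- Auxiliary: the summand function in the definition of the `z`'s. -/
noncomputable def AA (N : ℕ) (a p : ℕ → ℝ) (E : Finset (ℕ × ℕ)) (j : ℕ) : ℝ :=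
  dpar a j / qq p (bG E (j - 1)) -
    z1G N a p E * ((qq p (bG E j) - qq p (bG E (j - 1))) / qq p (bG E (j - 1)))

section
variable {N : ℕ} {a p : ℕ → ℝ} {E : Finset (ℕ × ℕ)}

lemma sum_swap_tri {α : Type*} [AddCommMonoid α] (F : ℕ → ℕ → α) (lo hi c : ℕ) :
    ∑ j ∈ Finset.Ioc lo hi, ∑ k ∈ Finset.Icc c j, F k j
      = ∑ k ∈ Finset.Icc c hi, ∑ j ∈ Finset.Icc (max k (lo + 1)) hi, F k j := by
  have h1 : ∀ j ∈ Finset.Ioc lo hi,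
      ∑ k ∈ Finset.Icc c j, F k j = ∑ k ∈ Finset.Icc c hi, if k ≤ j then F k j else 0 := by
    intro j hj
    rw [Finset.mem_Ioc] at hj
    rw [← Finset.sum_filter]
    congr 1
    ext x; simp only [Finset.mem_filter, Finset.mem_Icc]; omega
  rw [Finset.sum_congr rfl h1, Finset.sum_comm]
  apply Finset.sum_congr rfl
  intro k _
  rw [← Finset.sum_filter]
  congr 1
  ext x; simp only [Finset.mem_filter, Finset.mem_Icc, Finset.mem_Ioc]; omega

lemma dpar_pos (hap : IsParam N a p) {j : ℕ} (h1 : 1 ≤ j) (h2 : j ≤ N) : 0 < dpar a j := by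
  rcases eq_or_lt_of_le h1 with h | h
  · rw [dpar, if_pos h.symm]; exact hap.1
  · rw [dpar, if_neg (by omega)]
    have := hap.2.1 (j - 1) (by omega) (by omega)
    rw [show j - 1 + 1 = j by omega] at this
    linarith

lemma qq_bG_pos (hap : IsParam N a p) (hE : IsDCGraph N E) (hN : 1 ≤ N) {i : ℕ} (hi : i ≤ N) :
    0 < qq p (bG E i) :=
  qq_pos hap.2.2 (bG_pos i) (bG_le hE hN hi)

lemma gammaG_nonneg (hap : IsParam N a p) (hE : IsDCGraph N E) (hN : 1 ≤ N) :
    ∀ x y, (x, y) ∈ E → 0 ≤ gammaG p E x y := by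
  intro x y hxy
  have hmem := mem_ENfin.mp (hE.1 hxy)
  have hx1 : 1 ≤ x := hmem.1
  have hyN : y ≤ N := hmem.2.2
  have hxN : x ≤ N := by omega
  have hyb : y ≤ bG E x := ((edge_iff hE hx1).mp hxy).2
  have hbmono : bG E (x - 1) ≤ bG E x := bG_mono hE (by omega)
  have hmax : max (y - 1) (bG E (x - 1)) ≤ bG E x := by
    apply max_le (by omega) hbmono
  rw [gammaG]
  apply div_nonneg
  · rw [sub_nonneg]
    exact qq_mono hap.2.2 hmax (bG_le hE hN hxN)
  · exact (qq_bG_pos hap hE hN (by omega)).le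

lemma GammaG_nonneg (hap : IsParam N a p) (hE : IsDCGraph N E) (hN : 1 ≤ N) (i j : ℕ) :
    0 ≤ GammaG p E i j :=
  GammaPath_nonneg (gammaG_nonneg hap hE hN) i j

lemma den_pos (hap : IsParam N a p) (hE : IsDCGraph N E) (hN : 1 ≤ N) :
    0 < 1 + ∑ j ∈ Finset.Icc 1 N,
      GammaG p E 1 j * (qq p (bG E j) - qq p (bG E (j - 1))) / qq p (bG E (j - 1)) := by
  have h : 0 ≤ ∑ j ∈ Finset.Icc 1 N,
      GammaG p E 1 j * (qq p (bG E j) - qq p (bG E (j - 1))) / qq p (bG E (j - 1)) := by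
    apply Finset.sum_nonneg
    intro j hj
    rw [Finset.mem_Icc] at hj
    apply div_nonneg
    · apply mul_nonneg (GammaG_nonneg hap hE hN 1 j)
      rw [sub_nonneg]
      exact qq_mono hap.2.2 (bG_mono hE (by omega)) (bG_le hE hN hj.2)
    · exact (qq_bG_pos hap hE hN (by omega)).le
  linarith

lemma num_pos (hap : IsParam N a p) (hE : IsDCGraph N E) (hN : 1 ≤ N) :
    0 < ∑ j ∈ Finset.Icc 1 N, GammaG p E 1 j * dpar a j / qq p (bG E (j - 1)) := by
  apply Finset.sum_pos'
  · intro j hj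
    rw [Finset.mem_Icc] at hj
    apply div_nonneg
    · exact mul_nonneg (GammaG_nonneg hap hE hN 1 j) (dpar_pos hap hj.1 hj.2).le
    · exact (qq_bG_pos hap hE hN (by omega)).le
  · refine ⟨1, by simp [hN], ?_⟩
    have h1 : GammaG p E 1 1 = 1 := GammaPath_self 1
    rw [h1, one_mul]
    apply div_pos (dpar_pos hap (le_refl 1) hN)
    exact qq_bG_pos hap hE hN (by omega)

lemma z1G_pos (hap : IsParam N a p) (hE : IsDCGraph N E) (hN : 1 ≤ N) : 0 < z1G N a p E :=
  div_pos (num_pos hap hE hN) (den_pos hap hE hN)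

lemma zG_one : zG N a p E 1 = z1G N a p E := by rw [zG, if_pos rfl]

lemma zG_eq (hap : IsParam N a p) (hE : IsDCGraph N E) (hN : 1 ≤ N) {i : ℕ}
    (h1 : 1 ≤ i) (h2 : i ≤ N) :
    zG N a p E i = ∑ j ∈ Finset.Icc i N, GammaG p E i j * AA N a p E j := by
  have hexp : ∀ i', ∑ j ∈ Finset.Icc i' N, GammaG p E i' j * AA N a p E j
      = (∑ j ∈ Finset.Icc i' N, GammaG p E i' j * dpar a j / qq p (bG E (j - 1)))
        - z1G N a p E * ∑ j ∈ Finset.Icc i' N,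
            GammaG p E i' j * (qq p (bG E j) - qq p (bG E (j - 1))) / qq p (bG E (j - 1)) := by
    intro i'
    rw [Finset.mul_sum, ← Finset.sum_sub_distrib]
    apply Finset.sum_congr rfl
    intro j _
    rw [AA]
    ring
  rcases eq_or_lt_of_le h1 with h | h
  · subst h
    rw [zG_one, hexp]
    have hden := den_pos hap hE hN
    have hz1 : z1G N a p E * (1 + ∑ j ∈ Finset.Icc 1 N,
        GammaG p E 1 j * (qq p (bG E j) - qq p (bG E (j - 1))) / qq p (bG E (j - 1)))
        = ∑ j ∈ Finset.Icc 1 N, GammaG p E 1 j * dpar a j / qq p (bG E (j - 1)) := by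
      rw [z1G, div_mul_cancel₀]
      exact ne_of_gt hden
    linarith [hz1]
  · rw [zG, if_neg (by omega), hexp]
lemma zG_rec (hap : IsParam N a p) (hE : IsDCGraph N E) (hN : 1 ≤ N) {i : ℕ}
    (h1 : 1 ≤ i) (h2 : i ≤ N) :
    zG N a p E i = AA N a p E i
      + ∑ k ∈ Finset.Ioc i (bG E i), gammaG p E i k * zG N a p E k := by
  rw [zG_eq hap hE hN h1 h2]
  have hIcc : Finset.Icc i N = insert i (Finset.Ioc i N) := by
    ext x; simp only [Finset.mem_Icc, Finset.mem_insert, Finset.mem_Ioc]; omega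
  have hGii : GammaG p E i i = 1 := GammaPath_self i
  rw [hIcc, Finset.sum_insert (by simp), hGii, one_mul]
  congr 1
  have hstep : ∀ j ∈ Finset.Ioc i N, GammaG p E i j * AA N a p E j
      = ∑ k ∈ Finset.Icc (i + 1) j,
          (if (i, k) ∈ E then gammaG p E i k * (GammaG p E k j * AA N a p E j) else 0) := by
    intro j hj
    rw [Finset.mem_Ioc] at hj
    have hg : GammaG p E i j
        = ∑ k ∈ Finset.Ioc i j,
            (if (i, k) ∈ E then gammaG p E i k * GammaG p E k j else 0) :=
      gammaPath_rec hj.1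
    rw [show Finset.Icc (i + 1) j = Finset.Ioc i j by
      ext x; simp only [Finset.mem_Icc, Finset.mem_Ioc]; omega]
    rw [hg, Finset.sum_mul]
    apply Finset.sum_congr rfl
    intro k _
    by_cases hc : (i, k) ∈ E
    · simp only [hc, if_true, mul_assoc]
    · simp only [hc, if_false, zero_mul]
  rw [Finset.sum_congr rfl hstep, sum_swap_tri]
  have hmax : ∀ k ∈ Finset.Icc (i + 1) N, max k (i + 1) = k := by
    intro k hk; rw [Finset.mem_Icc] at hk; omega
  calc ∑ k ∈ Finset.Icc (i + 1) N, ∑ j ∈ Finset.Icc (max k (i + 1)) N,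
        (if (i, k) ∈ E then gammaG p E i k * (GammaG p E k j * AA N a p E j) else 0)
      = ∑ k ∈ Finset.Icc (i + 1) N,
          (if (i, k) ∈ E then gammaG p E i k * zG N a p E k else 0) := by
        apply Finset.sum_congr rfl
        intro k hk
        rw [hmax k hk]
        rw [Finset.mem_Icc] at hk
        by_cases hc : (i, k) ∈ E
        · simp only [hc, if_true]
          rw [← Finset.mul_sum, ← zG_eq hap hE hN (by omega) hk.2]
        · simp only [hc, if_false, Finset.sum_const_zero]
    _ = ∑ k ∈ Finset.Ioc i (bG E i), gammaG p E i k * zG N a p E k := by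
        rw [← Finset.sum_filter]
        apply Finset.sum_congr _ (fun _ _ => rfl)
        ext k
        simp only [Finset.mem_filter, Finset.mem_Icc, Finset.mem_Ioc]
        constructor
        · rintro ⟨⟨hk1, hk2⟩, hk3⟩
          exact ((edge_iff hE h1).mp hk3)
        · rintro ⟨hk1, hk2⟩
          have hkN : k ≤ N := le_trans hk2 (bG_le hE hN h2)
          exact ⟨⟨by omega, hkN⟩, (edge_iff hE h1).mpr ⟨hk1, hk2⟩⟩

lemma Ri (hap : IsParam N a p) (hE : IsDCGraph N E) (hN : 1 ≤ N) {i : ℕ}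
    (h1 : 1 ≤ i) (h2 : i ≤ N) :
    dpar a i = qq p (bG E (i - 1)) * zG N a p E i
      + ∑ j ∈ Finset.Ioc (bG E (i - 1)) (bG E i), p j * (z1G N a p E - ZG N a p E i j) := by
  have hB'B : bG E (i - 1) ≤ bG E i := bG_mono hE (by omega)
  have hBN : bG E i ≤ N := bG_le hE hN h2
  have hB'N : bG E (i - 1) ≤ N := le_trans hB'B hBN
  have hQ : 0 < qq p (bG E (i - 1)) := qq_bG_pos hap hE hN (by omega)
  have hrec := zG_rec hap hE hN h1 h2
  have hQA : qq p (bG E (i - 1)) * AA N a p E i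
      = dpar a i - z1G N a p E * (qq p (bG E i) - qq p (bG E (i - 1))) := by
    rw [AA]
    field_simp
  have hQγ : ∀ k, qq p (bG E (i - 1)) * gammaG p E i k
      = qq p (bG E i) - qq p (max (k - 1) (bG E (i - 1))) := by
    intro k
    rw [gammaG]
    field_simp
  have hmul : qq p (bG E (i - 1)) * zG N a p E i
      = dpar a i - z1G N a p E * (qq p (bG E i) - qq p (bG E (i - 1)))
        + ∑ k ∈ Finset.Ioc i (bG E i),
            (qq p (bG E i) - qq p (max (k - 1) (bG E (i - 1)))) * zG N a p E k := by
    rw [hrec, mul_add, hQA, Finset.mul_sum]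
    congr 1
    apply Finset.sum_congr rfl
    intro k _
    rw [← mul_assoc, hQγ k]
  have hswap : ∑ j ∈ Finset.Ioc (bG E (i - 1)) (bG E i), p j * ZG N a p E i j
      = ∑ k ∈ Finset.Ioc i (bG E i),
          (qq p (bG E i) - qq p (max (k - 1) (bG E (i - 1)))) * zG N a p E k := by
    have h0 : ∀ j ∈ Finset.Ioc (bG E (i - 1)) (bG E i), p j * ZG N a p E i j
        = ∑ l ∈ Finset.Icc (i + 1) j, p j * zG N a p E l := by
      intro j _
      rw [ZG, Finset.mul_sum]
    rw [Finset.sum_congr rfl h0, sum_swap_tri]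
    have h3 : ∀ l ∈ Finset.Icc (i + 1) (bG E i),
        ∑ j ∈ Finset.Icc (max l (bG E (i - 1) + 1)) (bG E i), p j * zG N a p E l
          = (qq p (bG E i) - qq p (max (l - 1) (bG E (i - 1)))) * zG N a p E l := by
      intro l hl
      rw [Finset.mem_Icc] at hl
      rw [← Finset.sum_mul]
      congr 1
      have h4 : Finset.Icc (max l (bG E (i - 1) + 1)) (bG E i)
          = Finset.Ioc (max (l - 1) (bG E (i - 1))) (bG E i) := by
        ext x; simp only [Finset.mem_Icc, Finset.mem_Ioc]; omega
      rw [h4, ← qq_sub hap.2.2 (by omega)]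
    rw [Finset.sum_congr rfl h3]
    apply Finset.sum_congr _ (fun _ _ => rfl)
    ext x; simp only [Finset.mem_Icc, Finset.mem_Ioc]; omega
  have hpsum : ∑ j ∈ Finset.Ioc (bG E (i - 1)) (bG E i), p j
      = qq p (bG E i) - qq p (bG E (i - 1)) := (qq_sub hap.2.2 hB'B).symm
  have hdist : ∑ j ∈ Finset.Ioc (bG E (i - 1)) (bG E i), p j * (z1G N a p E - ZG N a p E i j)
      = z1G N a p E * ∑ j ∈ Finset.Ioc (bG E (i - 1)) (bG E i), p j
        - ∑ j ∈ Finset.Ioc (bG E (i - 1)) (bG E i), p j * ZG N a p E i j := by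
    rw [Finset.mul_sum, ← Finset.sum_sub_distrib]
    apply Finset.sum_congr rfl
    intro j _
    ring
  rw [hdist, hpsum, hswap]
  linarith [hmul]

end

section
variable {N : ℕ} {a p : ℕ → ℝ} {E : Finset (ℕ × ℕ)}

lemma minNE_case_A (hE : IsDCGraph N E) {i : ℕ} (h2i : 2 ≤ i) (hiN : i ≤ N)
    (hb : bG E (i - 1) = i - 1) : (i - 1, i) ∈ minNE N E := by
  rw [minNE, Finset.mem_filter]
  constructor
  · rw [Finset.mem_sdiff]
    constructor
    · rw [mem_ENfin]; omega
    · intro h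
      have := ((edge_iff hE (by omega)).mp h).2
      omega
  · rintro ⟨x, y⟩ _ hn
    obtain ⟨hn1, hn2, hn3⟩ := hn
    simp only [Prod.mk.injEq]
    simp only at hn1 hn2 hn3
    omega

lemma minNE_case_B (hE : IsDCGraph N E) {i : ℕ} (h2i : 2 ≤ i) (hiN : i ≤ N)
    (hb : i ≤ bG E (i - 1)) (hbb : bG E (i - 1) < bG E i) (hBN : bG E i ≤ N) :
    (i - 1, bG E (i - 1) + 1) ∈ minNE N E := by
  rw [minNE, Finset.mem_filter]
  constructor
  · rw [Finset.mem_sdiff]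
    constructor
    · rw [mem_ENfin]; omega
    · intro h
      have := ((edge_iff hE (by omega)).mp h).2
      omega
  · rintro ⟨x, y⟩ he' hn
    obtain ⟨hn1, hn2, hn3⟩ := hn
    simp only at hn1 hn2 hn3
    rw [Finset.mem_sdiff] at he'
    have hx1 : 1 ≤ x := by omega
    simp only [Prod.mk.injEq]
    by_contra hc
    rcases le_or_gt y (bG E (i - 1)) with hy | hy
    · have : (x, y) ∈ E := by
        apply (edge_iff hE hx1).mpr
        exact ⟨hn2, le_trans hy (bG_mono hE (by omega))⟩
      exact he'.2 this
    · have hyv : y = bG E (i - 1) + 1 := by omega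
      have hxv : i ≤ x := by
        rcases le_or_gt i x with h | h
        · exact h
        · exfalso; apply hc; constructor <;> omega
      have : (x, y) ∈ E := by
        apply (edge_iff hE hx1).mpr
        refine ⟨hn2, ?_⟩
        rw [hyv]
        exact le_trans hbb (bG_mono hE hxv)
      exact he'.2 this

lemma exists_max_nested (hE : IsDCGraph N E) {e : ℕ × ℕ} (he : e ∈ E) :
    ∃ e' ∈ maxE E, Nested e e' := by
  have hlt : e.1 < e.2 := (mem_ENfin (i := e.1) (j := e.2)).mp (by rw [Prod.mk.eta]; exact hE.1 he) |>.2.1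
  have hne : (E.filter fun e' => Nested e e').Nonempty :=
    ⟨e, Finset.mem_filter.mpr ⟨he, le_refl _, hlt, le_refl _⟩⟩
  obtain ⟨e', he', hmax⟩ := Finset.exists_max_image _ (fun x => x.2 - x.1) hne
  rw [Finset.mem_filter] at he'
  refine ⟨e', ?_, he'.2⟩
  rw [maxE, Finset.mem_filter]
  refine ⟨he'.1, ?_⟩
  intro e'' he'' hn
  have hnest : Nested e e'' :=
    ⟨le_trans hn.1 he'.2.1, he'.2.2.1, le_trans he'.2.2.2 hn.2.2⟩
  have hW := hmax e'' (Finset.mem_filter.mpr ⟨he'', hnest⟩)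
  obtain ⟨u, v⟩ := e''
  obtain ⟨u', v'⟩ := e'
  obtain ⟨h1, h2, h3⟩ := hn
  simp only [Prod.mk.injEq]
  simp only at h1 h2 h3 hW
  omega

lemma exists_min_nonedge (hE : IsDCGraph N E) {e : ℕ × ℕ} (he : e ∈ ENfin N \ E) :
    ∃ e' ∈ minNE N E, Nested e' e := by
  have hlt : e.1 < e.2 := by
    have := (Finset.mem_sdiff.mp he).1
    exact ((mem_ENfin (i := e.1) (j := e.2)).mp (by rw [Prod.mk.eta]; exact this)).2.1
  have hne : ((ENfin N \ E).filter fun e' => Nested e' e).Nonempty :=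
    ⟨e, Finset.mem_filter.mpr ⟨he, le_refl _, hlt, le_refl _⟩⟩
  obtain ⟨e', he', hmin⟩ := Finset.exists_min_image _ (fun x => x.2 - x.1) hne
  rw [Finset.mem_filter] at he'
  refine ⟨e', ?_, he'.2⟩
  rw [minNE, Finset.mem_filter]
  refine ⟨he'.1, ?_⟩
  intro e'' he'' hn
  have hnest : Nested e'' e :=
    ⟨le_trans he'.2.1 hn.1, hn.2.1, le_trans hn.2.2 he'.2.2.2⟩
  have hW := hmin e'' (Finset.mem_filter.mpr ⟨he'', hnest⟩)
  obtain ⟨u, v⟩ := e''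
  obtain ⟨u', v'⟩ := e'
  obtain ⟨h1, h2, h3⟩ := hn
  have h4 := he'.2.2.1
  simp only [Prod.mk.injEq]
  simp only at h1 h2 h3 hW h4
  omega

end

section
variable {N : ℕ} {a p : ℕ → ℝ} {E : Finset (ℕ × ℕ)}

lemma zG_pos_all (hap : IsParam N a p) (hE : IsDCGraph N E) (hN : 1 ≤ N)
    (hle : ∀ e ∈ minNE N E, z1G N a p E ≤ ZG N a p E e.1 e.2) :
    ∀ i, 1 ≤ i → i ≤ N → 0 < zG N a p E i := by
  suffices H : ∀ d : ℕ, ∀ i, 1 ≤ i → i ≤ N → N - i ≤ d → 0 < zG N a p E i by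
    intro i h1 h2; exact H (N - i) i h1 h2 (le_refl _)
  intro d
  induction d using Nat.strong_induction_on with
  | _ d ih =>
  intro i h1 h2 hd
  have ihz : ∀ l, i < l → l ≤ N → 0 < zG N a p E l := by
    intro l hl1 hl2
    exact ih (N - l) (by omega) l (by omega) hl2 (le_refl _)
  rcases eq_or_lt_of_le h1 with h | h
  · rw [← h, zG_one]; exact z1G_pos hap hE hN
  · have h2i : 2 ≤ i := h
    have hb' : i - 1 ≤ bG E (i - 1) := le_bG (by omega)
    have hRi := Ri hap hE hN h1 h2
    have hBN : bG E i ≤ N := bG_le hE hN h2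
    have hB'B : bG E (i - 1) ≤ bG E i := bG_mono hE (by omega)
    rcases eq_or_lt_of_le hb' with hbA | hbB
    · -- case A : bG E (i-1) = i-1, use minimal non-edge (i-1, i)
      have hmin := minNE_case_A hE h2i h2 hbA.symm
      have hz1 := hle _ hmin
      have hZ : ZG N a p E (i - 1) i = zG N a p E i := by
        rw [ZG, show i - 1 + 1 = i by omega, Finset.Icc_self, Finset.sum_singleton]
      simp only at hz1
      rw [hZ] at hz1
      exact lt_of_lt_of_le (z1G_pos hap hE hN) hz1
    · have hbB' : i ≤ bG E (i - 1) := by omega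
      rcases eq_or_lt_of_le hB'B with hBB | hBB
      · -- sub-case bG E (i-1) = bG E i : empty extra sum
        rw [hBB, Finset.Ioc_self, Finset.sum_empty, add_zero] at hRi
        have hd' := dpar_pos hap h1 h2
        have hQ : 0 < qq p (bG E (i - 1)) := qq_bG_pos hap hE hN (by omega)
        rw [hBB] at hQ
        by_contra hz
        push_neg at hz
        nlinarith
      · -- main case, use minimal non-edge (i-1, bG E (i-1) + 1)
        have hmin := minNE_case_B hE h2i h2 hbB' hBB hBN
        have hz1 := hle _ hmin
        simp only at hz1
        have hkey : ∀ j ∈ Finset.Ioc (bG E (i - 1)) (bG E i),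
            z1G N a p E - ZG N a p E i j ≤ zG N a p E i := by
          intro j hj
          rw [Finset.mem_Ioc] at hj
          have hsplit : ZG N a p E (i - 1) j = zG N a p E i + ZG N a p E i j := by
            rw [ZG, ZG, show i - 1 + 1 = i by omega]
            rw [show Finset.Icc i j = insert i (Finset.Icc (i + 1) j) by
              ext x; simp only [Finset.mem_Icc, Finset.mem_insert]; omega]
            rw [Finset.sum_insert (by simp)]
          have hmono : ZG N a p E (i - 1) (bG E (i - 1) + 1) ≤ ZG N a p E (i - 1) j := by
            rw [ZG, ZG, show i - 1 + 1 = i by omega]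
            apply Finset.sum_le_sum_of_subset_of_nonneg
            · intro x hx
              rw [Finset.mem_Icc] at hx ⊢
              omega
            · intro l hl hl'
              rw [Finset.mem_Icc] at hl
              rw [Finset.mem_Icc] at hl'
              exact (ihz l (by omega) (by omega)).le
          linarith
        have hsum : ∑ j ∈ Finset.Ioc (bG E (i - 1)) (bG E i),
              p j * (z1G N a p E - ZG N a p E i j)
            ≤ (qq p (bG E i) - qq p (bG E (i - 1))) * zG N a p E i := by
          rw [qq_sub hap.2.2 hB'B, Finset.sum_mul]
          apply Finset.sum_le_sum
          intro j hj
          have hjm := Finset.mem_Ioc.mp hj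
          have hpj : 0 < p j := hap.2.2 j (by omega) (by omega)
          exact mul_le_mul_of_nonneg_left (hkey j hj) hpj.le
        have hd' := dpar_pos hap h1 h2
        have hQB : 0 < qq p (bG E i) := qq_bG_pos hap hE hN h2
        have hQ : 0 < qq p (bG E (i - 1)) := qq_bG_pos hap hE hN (by omega)
        by_contra hz
        push_neg at hz
        nlinarith

end

section
variable {N : ℕ} {a p : ℕ → ℝ} {E : Finset (ℕ × ℕ)}

lemma pos'_mono {x y : ℝ} (h : x ≤ y) : pos' x ≤ pos' y := max_le_max h (le_refl 0)

lemma pos'_of_nonneg {x : ℝ} (h : 0 ≤ x) : pos' x = x := max_eq_left h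

lemma pos'_of_nonpos {x : ℝ} (h : x ≤ 0) : pos' x = 0 := max_eq_right h

lemma Ssub {i j : ℕ} (hij : i ≤ j) :
    (∑ l ∈ Finset.Icc 1 j, zG N a p E l) - (∑ l ∈ Finset.Icc 1 i, zG N a p E l)
      = ZG N a p E i j := by
  rw [ZG]
  rw [show Finset.Icc 1 j = Finset.Icc 1 i ∪ Finset.Icc (i + 1) j by
    ext x; simp only [Finset.mem_union, Finset.mem_Icc]; omega]
  rw [Finset.sum_union (by
    rw [Finset.disjoint_left]
    intro x hx hx'
    rw [Finset.mem_Icc] at hx hx'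
    omega)]
  ring

lemma ZG_nonneg (hpos : ∀ l, 1 ≤ l → l ≤ N → 0 < zG N a p E l) {i j : ℕ}
    (h1 : 1 ≤ i) (hj : j ≤ N) : 0 ≤ ZG N a p E i j := by
  rw [ZG]
  apply Finset.sum_nonneg
  intro l hl
  rw [Finset.mem_Icc] at hl
  exact (hpos l (by omega) (by omega)).le

lemma edge_le (hE : IsDCGraph N E)
    (hge : ∀ e ∈ maxE E, ZG N a p E e.1 e.2 ≤ z1G N a p E)
    (hpos : ∀ l, 1 ≤ l → l ≤ N → 0 < zG N a p E l)
    {i j : ℕ} (h1 : 1 ≤ i) (hij : i < j) (hjb : j ≤ bG E i) :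
    ZG N a p E i j ≤ z1G N a p E := by
  have he : (i, j) ∈ E := (edge_iff hE h1).mpr ⟨hij, hjb⟩
  obtain ⟨e', hmax, hn⟩ := exists_max_nested hE he
  obtain ⟨u, v⟩ := e'
  obtain ⟨hn1, hn2, hn3⟩ := hn
  simp only at hn1 hn2 hn3
  have he' : (u, v) ∈ E := (Finset.mem_filter.mp hmax).1
  have hmem := mem_ENfin.mp (hE.1 he')
  have hZZ : ZG N a p E i j ≤ ZG N a p E u v := by
    rw [ZG, ZG]
    apply Finset.sum_le_sum_of_subset_of_nonneg
    · intro x hx; rw [Finset.mem_Icc] at hx ⊢; omega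
    · intro l hl _
      rw [Finset.mem_Icc] at hl
      exact (hpos l (by omega) (by omega)).le
  exact le_trans hZZ (hge (u, v) hmax)

lemma nonedge_ge (hE : IsDCGraph N E)
    (hle : ∀ e ∈ minNE N E, z1G N a p E ≤ ZG N a p E e.1 e.2)
    (hpos : ∀ l, 1 ≤ l → l ≤ N → 0 < zG N a p E l)
    {i j : ℕ} (h1 : 1 ≤ i) (hij : i < j) (hjN : j ≤ N) (hjb : bG E i < j) :
    z1G N a p E ≤ ZG N a p E i j := by
  have he : (i, j) ∈ ENfin N \ E := by
    rw [Finset.mem_sdiff]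
    constructor
    · rw [mem_ENfin]; omega
    · intro h
      have := ((edge_iff hE h1).mp h).2
      omega
  obtain ⟨e', hmin, hn⟩ := exists_min_nonedge hE he
  obtain ⟨u, v⟩ := e'
  obtain ⟨hn1, hn2, hn3⟩ := hn
  simp only at hn1 hn2 hn3
  have he' := (Finset.mem_sdiff.mp (Finset.mem_filter.mp hmin).1).1
  have hmem := mem_ENfin.mp he'
  have hZZ : ZG N a p E u v ≤ ZG N a p E i j := by
    rw [ZG, ZG]
    apply Finset.sum_le_sum_of_subset_of_nonneg
    · intro x hx; rw [Finset.mem_Icc] at hx ⊢; omega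
    · intro l hl _
      rw [Finset.mem_Icc] at hl
      exact (hpos l (by omega) (by omega)).le
  exact le_trans (hle (u, v) hmin) hZZ

lemma FF (hap : IsParam N a p) (hE : IsDCGraph N E) (hN : 1 ≤ N) :
    ∀ i, 1 ≤ i → i ≤ N → a i = ∑ j ∈ Finset.Icc 1 (bG E i),
      p j * ((∑ l ∈ Finset.Icc 1 i, zG N a p E l) - (∑ l ∈ Finset.Icc 1 j, zG N a p E l)
        + ∑ l ∈ Finset.Icc 1 1, zG N a p E l) := by
  intro i h1
  induction i, h1 using Nat.le_induction with
  | base =>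
    intro hN1
    have hR1 := Ri hap hE hN (le_refl 1) hN1
    rw [show (1 : ℕ) - 1 = 0 from rfl, bG_zero] at hR1
    have hq1 : qq p 1 = p 1 := by rw [qq, Finset.Icc_self, Finset.sum_singleton]
    have hsplit : Finset.Icc 1 (bG E 1) = insert 1 (Finset.Ioc 1 (bG E 1)) := by
      ext x
      simp only [Finset.mem_Icc, Finset.mem_insert, Finset.mem_Ioc]
      have := bG_pos (E := E) 1
      omega
    rw [hsplit, Finset.sum_insert (by simp)]
    have hterm : ∀ j ∈ Finset.Ioc 1 (bG E 1),
        p j * ((∑ l ∈ Finset.Icc 1 1, zG N a p E l) - (∑ l ∈ Finset.Icc 1 j, zG N a p E l)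
          + ∑ l ∈ Finset.Icc 1 1, zG N a p E l)
        = p j * (z1G N a p E - ZG N a p E 1 j) := by
      intro j hj
      rw [Finset.mem_Ioc] at hj
      have hs := Ssub (N := N) (a := a) (p := p) (E := E) (le_of_lt hj.1)
      have hS1 : ∑ l ∈ Finset.Icc 1 1, zG N a p E l = z1G N a p E := by
        rw [Finset.Icc_self, Finset.sum_singleton, zG_one]
      rw [hS1]
      have : (∑ l ∈ Finset.Icc 1 j, zG N a p E l) = z1G N a p E + ZG N a p E 1 j := by
        rw [← hs, hS1]; ring
      rw [this]
      ring
    rw [Finset.sum_congr rfl hterm]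
    have hS1 : ∑ l ∈ Finset.Icc 1 1, zG N a p E l = z1G N a p E := by
      rw [Finset.Icc_self, Finset.sum_singleton, zG_one]
    rw [hS1]
    have hd1 : dpar a 1 = a 1 := by rw [dpar, if_pos rfl]
    rw [hd1] at hR1
    rw [hR1, zG_one, hq1]
    ring
  | succ i hi ih =>
    intro hiN
    have hiN' : i ≤ N := by omega
    have hIH := ih hiN'
    have hRi := Ri hap hE hN (by omega : 1 ≤ i + 1) hiN
    rw [show i + 1 - 1 = i from rfl] at hRi
    have hBmono : bG E i ≤ bG E (i + 1) := bG_mono hE (by omega)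
    have hB1 : 1 ≤ bG E i := bG_pos i
    have hsplit : Finset.Icc 1 (bG E (i + 1))
        = Finset.Icc 1 (bG E i) ∪ Finset.Ioc (bG E i) (bG E (i + 1)) := by
      ext x; simp only [Finset.mem_union, Finset.mem_Icc, Finset.mem_Ioc]; omega
    have hdisj : Disjoint (Finset.Icc 1 (bG E i)) (Finset.Ioc (bG E i) (bG E (i + 1))) := by
      rw [Finset.disjoint_left]
      intro x hx hx'
      rw [Finset.mem_Icc] at hx; rw [Finset.mem_Ioc] at hx'; omega
    rw [hsplit, Finset.sum_union hdisj]
    have hSsucc : ∑ l ∈ Finset.Icc 1 (i + 1), zG N a p E l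
        = (∑ l ∈ Finset.Icc 1 i, zG N a p E l) + zG N a p E (i + 1) := by
      exact Finset.sum_Icc_succ_top (by omega : 1 ≤ i + 1) _
    have hfirst : ∑ j ∈ Finset.Icc 1 (bG E i),
        p j * ((∑ l ∈ Finset.Icc 1 (i + 1), zG N a p E l)
          - (∑ l ∈ Finset.Icc 1 j, zG N a p E l) + ∑ l ∈ Finset.Icc 1 1, zG N a p E l)
        = a i + qq p (bG E i) * zG N a p E (i + 1) := by
      have : ∀ j ∈ Finset.Icc 1 (bG E i),
          p j * ((∑ l ∈ Finset.Icc 1 (i + 1), zG N a p E l)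
            - (∑ l ∈ Finset.Icc 1 j, zG N a p E l) + ∑ l ∈ Finset.Icc 1 1, zG N a p E l)
          = p j * ((∑ l ∈ Finset.Icc 1 i, zG N a p E l)
            - (∑ l ∈ Finset.Icc 1 j, zG N a p E l) + ∑ l ∈ Finset.Icc 1 1, zG N a p E l)
            + p j * zG N a p E (i + 1) := by
        intro j _
        rw [hSsucc]; ring
      rw [Finset.sum_congr rfl this, Finset.sum_add_distrib, hIH, ← Finset.sum_mul]
      rw [qq]
    have hsecond : ∀ j ∈ Finset.Ioc (bG E i) (bG E (i + 1)),
        p j * ((∑ l ∈ Finset.Icc 1 (i + 1), zG N a p E l)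
          - (∑ l ∈ Finset.Icc 1 j, zG N a p E l) + ∑ l ∈ Finset.Icc 1 1, zG N a p E l)
        = p j * (z1G N a p E - ZG N a p E (i + 1) j) := by
      intro j hj
      rw [Finset.mem_Ioc] at hj
      have hij : i + 1 ≤ j := by
        have := le_bG (E := E) (by omega : 1 ≤ i)
        omega
      have hs := Ssub (N := N) (a := a) (p := p) (E := E) hij
      have hS1 : ∑ l ∈ Finset.Icc 1 1, zG N a p E l = z1G N a p E := by
        rw [Finset.Icc_self, Finset.sum_singleton, zG_one]
      rw [hS1]
      have : (∑ l ∈ Finset.Icc 1 j, zG N a p E l)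
          = (∑ l ∈ Finset.Icc 1 (i + 1), zG N a p E l) + ZG N a p E (i + 1) j := by
        rw [← hs]; ring
      rw [this]
      ring
    rw [hfirst, Finset.sum_congr rfl hsecond]
    have hdp : dpar a (i + 1) = a (i + 1) - a i := by
      rw [dpar, if_neg (by omega), show i + 1 - 1 = i from rfl]
    rw [hdp] at hRi
    linarith [hRi]

lemma stat_main (hap : IsParam N a p) (hE : IsDCGraph N E) (hN : 1 ≤ N)
    (hge : ∀ e ∈ maxE E, ZG N a p E e.1 e.2 ≤ z1G N a p E)
    (hle : ∀ e ∈ minNE N E, z1G N a p E ≤ ZG N a p E e.1 e.2) :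
    IsStationaryTuple N a p (fun i => ∑ l ∈ Finset.Icc 1 i, zG N a p E l) := by
  have hpos := zG_pos_all hap hE hN hle
  have hz1 := z1G_pos hap hE hN
  have hS1 : ∑ l ∈ Finset.Icc 1 1, zG N a p E l = z1G N a p E := by
    rw [Finset.Icc_self, Finset.sum_singleton, zG_one]
  refine ⟨?_, ?_, ?_⟩
  · simp only
    rw [hS1]; exact hz1
  · intro i hi1 hiN
    simp only
    rw [Finset.sum_Icc_succ_top (by omega : 1 ≤ i + 1)]
    have := hpos (i + 1) (by omega) (by omega)
    linarith
  · intro i hi1 hiN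
    simp only
    have hBN : bG E i ≤ N := bG_le hE hN hiN
    have hB1 : 1 ≤ bG E i := bG_pos i
    have hiB : i ≤ bG E i := le_bG hi1
    have hsplit : Finset.Icc 1 N = Finset.Icc 1 (bG E i) ∪ Finset.Ioc (bG E i) N := by
      ext x; simp only [Finset.mem_union, Finset.mem_Icc, Finset.mem_Ioc]; omega
    have hdisj : Disjoint (Finset.Icc 1 (bG E i)) (Finset.Ioc (bG E i) N) := by
      rw [Finset.disjoint_left]
      intro x hx hx'
      rw [Finset.mem_Icc] at hx; rw [Finset.mem_Ioc] at hx'; omega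
    rw [hsplit, Finset.sum_union hdisj]
    have hzero : ∀ j ∈ Finset.Ioc (bG E i) N,
        p j * pos' ((∑ l ∈ Finset.Icc 1 i, zG N a p E l)
          - (∑ l ∈ Finset.Icc 1 j, zG N a p E l) + ∑ l ∈ Finset.Icc 1 1, zG N a p E l) = 0 := by
      intro j hj
      rw [Finset.mem_Ioc] at hj
      have hij : i < j := by omega
      have hs := Ssub (N := N) (a := a) (p := p) (E := E) (le_of_lt hij)
      have harg : (∑ l ∈ Finset.Icc 1 i, zG N a p E l)
          - (∑ l ∈ Finset.Icc 1 j, zG N a p E l) + (∑ l ∈ Finset.Icc 1 1, zG N a p E l)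
          = z1G N a p E - ZG N a p E i j := by
        rw [hS1, ← hs]; ring
      rw [harg, pos'_of_nonpos (by
        have := nonedge_ge hE hle hpos hi1 hij hj.2 hj.1
        linarith), mul_zero]
    rw [Finset.sum_congr rfl hzero, Finset.sum_const_zero, add_zero]
    have hid : ∀ j ∈ Finset.Icc 1 (bG E i),
        p j * pos' ((∑ l ∈ Finset.Icc 1 i, zG N a p E l)
          - (∑ l ∈ Finset.Icc 1 j, zG N a p E l) + ∑ l ∈ Finset.Icc 1 1, zG N a p E l)
        = p j * ((∑ l ∈ Finset.Icc 1 i, zG N a p E l)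
          - (∑ l ∈ Finset.Icc 1 j, zG N a p E l) + ∑ l ∈ Finset.Icc 1 1, zG N a p E l) := by
      intro j hj
      rw [Finset.mem_Icc] at hj
      congr 1
      apply pos'_of_nonneg
      rcases le_or_gt j i with hji | hji
      · have hs := Ssub (N := N) (a := a) (p := p) (E := E) hji
        have hZ : 0 ≤ ZG N a p E j i := ZG_nonneg hpos hj.1 hiN
        rw [hS1]
        linarith [hz1]
      · have hs := Ssub (N := N) (a := a) (p := p) (E := E) (le_of_lt hji)
        have := edge_le hE hge hpos hi1 hji hj.2
        rw [hS1]
        linarith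
    rw [Finset.sum_congr rfl hid]
    exact FF hap hE hN i hi1 hiN

lemma stat_mono {s : ℕ → ℝ} (hs : IsStationaryTuple N a p s) :
    ∀ m n, 1 ≤ m → m ≤ n → n ≤ N → s m ≤ s n := by
  intro m n hm hmn
  induction n, hmn using Nat.le_induction with
  | base => intro _; exact le_refl _
  | succ n hmn ih =>
    intro hnN
    have h1 : s m ≤ s n := ih (by omega)
    have h2 : s n < s (n + 1) := hs.2.1 n (by omega) (by omega)
    linarith

lemma stat_le (hap : IsParam N a p) (hN : 1 ≤ N) {s s' : ℕ → ℝ}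
    (hs : IsStationaryTuple N a p s) (hs' : IsStationaryTuple N a p s') (h1 : s' 1 ≤ s 1) :
    ∀ j, 1 ≤ j → j ≤ N → s j ≤ s' j := by
  obtain ⟨istar, histar, hmax⟩ := Finset.exists_max_image (Finset.Icc 1 N)
    (fun j => s j - s' j) ⟨1, by simp [hN]⟩
  rw [Finset.mem_Icc] at histar
  have heq := hs.2.2 istar histar.1 histar.2
  have heq' := hs'.2.2 istar histar.1 histar.2
  have hterm : ∀ j ∈ Finset.Icc 1 N,
      0 ≤ p j * pos' (s istar - s j + s 1) - p j * pos' (s' istar - s' j + s' 1) := by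
    intro j hj
    rw [Finset.mem_Icc] at hj
    have hw := hmax j (by rw [Finset.mem_Icc]; exact hj)
    have hargs : s' istar - s' j + s' 1 ≤ s istar - s j + s 1 := by linarith
    have hp := hap.2.2 j hj.1 hj.2
    have := pos'_mono hargs
    nlinarith
  have hsum : ∑ j ∈ Finset.Icc 1 N,
      (p j * pos' (s istar - s j + s 1) - p j * pos' (s' istar - s' j + s' 1)) = 0 := by
    rw [Finset.sum_sub_distrib, ← heq, ← heq']
    ring
  have hall := (Finset.sum_eq_zero_iff_of_nonneg hterm).mp hsum
  have h1mem : (1 : ℕ) ∈ Finset.Icc 1 N := by simp [hN]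
  have hj1 := hall 1 h1mem
  have hP1 : pos' (s istar - s 1 + s 1) = s istar := by
    rw [show s istar - s 1 + s 1 = s istar by ring]
    apply pos'_of_nonneg
    have := stat_mono hs 1 istar (le_refl 1) histar.1 histar.2
    have := hs.1
    linarith
  have hP1' : pos' (s' istar - s' 1 + s' 1) = s' istar := by
    rw [show s' istar - s' 1 + s' 1 = s' istar by ring]
    apply pos'_of_nonneg
    have := stat_mono hs' 1 istar (le_refl 1) histar.1 histar.2
    have := hs'.1
    linarith
  have hp1 : 0 < p 1 := hap.2.2 1 (le_refl 1) hN
  rw [hP1, hP1'] at hj1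
  have hstar : s istar = s' istar := by
    have : p 1 * (s istar - s' istar) = 0 := by linarith
    rcases mul_eq_zero.mp this with h | h
    · linarith
    · linarith
  intro j hj1' hjN
  have hw := hmax j (by rw [Finset.mem_Icc]; exact ⟨hj1', hjN⟩)
  linarith

lemma stat_unique (hap : IsParam N a p) (hN : 1 ≤ N) {s s' : ℕ → ℝ}
    (hs : IsStationaryTuple N a p s) (hs' : IsStationaryTuple N a p s') :
    ∀ j, 1 ≤ j → j ≤ N → s j = s' j := by
  intro j hj1 hjN
  rcases le_total (s' 1) (s 1) with h | h
  · have hA := stat_le hap hN hs hs' h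
    have hB := stat_le hap hN hs' hs (hA 1 (le_refl 1) hN)
    exact le_antisymm (hA j hj1 hjN) (hB j hj1 hjN)
  · have hA := stat_le hap hN hs' hs h
    have hB := stat_le hap hN hs hs' (hA 1 (le_refl 1) hN)
    exact le_antisymm (hB j hj1 hjN) (hA j hj1 hjN)

end


/-- positivity of the `z_i^G` and identification of the stationary tuple,
Lemma 4.8 of the paper. -/
theorem stmt_19 (N : ℕ) (hN : 1 ≤ N) (a p : ℕ → ℝ) (hap : IsParam N a p)
    (E : Finset (ℕ × ℕ)) (hE : IsDCGraph N E)
    (hge : ∀ e ∈ maxE E, ZG N a p E e.1 e.2 ≤ z1G N a p E)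
    (hle : ∀ e ∈ minNE N E, z1G N a p E ≤ ZG N a p E e.1 e.2) :
    (∀ i, 1 ≤ i → i ≤ N → 0 < zG N a p E i) ∧
    IsStationaryTuple N a p (fun i => ∑ l ∈ Finset.Icc 1 i, zG N a p E l) ∧
    ∀ s : ℕ → ℝ, IsStationaryTuple N a p s →
      ∀ i, 1 ≤ i → i ≤ N → s i = ∑ l ∈ Finset.Icc 1 i, zG N a p E l := by
  have hpos := zG_pos_all hap hE hN hle
  have hstat := stat_main hap hE hN hge hle
  refine ⟨hpos, hstat, ?_⟩
  intro s hs i h1 h2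
  exact stat_unique hap hN hs hstat i h1 h2
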